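/- For every graph G, μ-tw(G) = α-tw(L²(G)), where L²(G) is the graph on E(G) with ef an edge whenever the distance between e and f in the line graph L(G) is 1 or 2 (equivalently, G[e ∪ f] is connected). -/

import Mathlib

open Set

universe u

variable {V : Type u}

/-- A set of vertices is independent if no two of its members are adjacent. -/
def IndepSet (G : SimpleGraph V) (I : Set V) : Prop :=
  I.Pairwise (fun u v => ¬ G.Adj u v)

/-- A maximal independent set of a graph. -/
def MaxIndep (G : SimpleGraph V) (I : Set V) : Prop :=
  IndepSet G I ∧ ∀ J : Set V, IndepSet G J → I ⊆ J → J = I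

/-- An induced matching with `k` edges `a i b i`: the `2k` endpoints are pairwise
distinct and the only edges of `G` between them are the matching edges themselves. -/
def IsInducedMatching (G : SimpleGraph V) (k : ℕ) (a b : Fin k → V) : Prop :=
  (∀ i, G.Adj (a i) (b i)) ∧
  ∀ i j, i ≠ j → ∀ x ∈ ({a i, b i} : Set V), ∀ y ∈ ({a j, b j} : Set V),
    x ≠ y ∧ ¬ G.Adj x y

/-- `μ_G(S)`: maximum size of an induced matching each of whose edges meets `S`. -/
noncomputable def muS (G : SimpleGraph V) (S : Set V) : ℕ :=
  sSup {k | ∃ a b : Fin k → V, IsInducedMatching G k a b ∧ ∀ i, a i ∈ S ∨ b i ∈ S}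

/-- `α_G(S)`: maximum size of an independent set contained in `S`. -/
noncomputable def alphaS (G : SimpleGraph V) (S : Set V) : ℕ :=
  sSup {n | ∃ I : Set V, I ⊆ S ∧ IndepSet G I ∧ I.ncard = n}

/-- The trace (restriction) of a set family on `S`. -/
def trace (S : Set V) (F : Set (Set V)) : Set (Set V) :=
  (fun I => I ∩ S) '' F

/-- A hypergraph (given by its edge set) is a clutter if no edge properly contains another. -/
def IsClutter (E : Set (Set V)) : Prop := ∀ h ∈ E, ∀ f ∈ E, f ⊆ h → f = h

/-- A transversal of a hypergraph: a set meeting every edge. -/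
def IsTransversal (E : Set (Set V)) (T : Set V) : Prop := ∀ h ∈ E, (T ∩ h).Nonempty

/-- The blocker: the clutter of all inclusion-wise minimal transversals. -/
def blocker (E : Set (Set V)) : Set (Set V) :=
  {T | IsTransversal E T ∧ ∀ T' ⊆ T, IsTransversal E T' → T' = T}

/-- Inclusion-wise minimal members of a family of sets. -/
def minEdges (F : Set (Set V)) : Set (Set V) := {h ∈ F | ∀ f ∈ F, f ⊆ h → f = h}

/-- Deletion of a vertex from a clutter. -/
def del (E : Set (Set V)) (v : V) : Set (Set V) := {h ∈ E | v ∉ h}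

/-- Contraction of a vertex in a clutter. -/
def contr (E : Set (Set V)) (v : V) : Set (Set V) :=
  minEdges ((fun h => h \ {v}) '' E)

/-- Contraction of a set of vertices in a clutter. -/
def contrSet (E : Set (Set V)) (B : Set V) : Set (Set V) :=
  minEdges ((fun h => h \ B) '' E)

/-- Join of two clutters: minimal elements of the union of the edge sets. -/
def cJoin (E F : Set (Set V)) : Set (Set V) := minEdges (E ∪ F)

/-- Meet of two clutters: minimal elements of pairwise unions of edges. -/
def cMeet (E F : Set (Set V)) : Set (Set V) :=
  minEdges {s | ∃ h ∈ E, ∃ f ∈ F, s = h ∪ f}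

/-- `H ∘ (h, u, v) = H[u; h∖{u}] ∨ H[v; h∖{v}]`. -/
def cOp (E : Set (Set V)) (h : Set V) (u v : V) : Set (Set V) :=
  cJoin (contrSet (del E u) (h \ {u})) (contrSet (del E v) (h \ {v}))

/-- An independent (stable) set of a hypergraph: contains no edge. -/
def HIndep (E : Set (Set V)) (I : Set V) : Prop := ∀ h ∈ E, ¬ h ⊆ I

/-- A maximal independent set of a hypergraph. -/
def MaxHIndep (E : Set (Set V)) (I : Set V) : Prop :=
  HIndep E I ∧ ∀ J : Set V, HIndep E J → I ⊆ J → J = I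

/-- The Gaifman graph of a hypergraph. -/
def gaif (E : Set (Set V)) : SimpleGraph V :=
  SimpleGraph.fromRel (fun u v => ∃ h ∈ E, u ∈ h ∧ v ∈ h)

/-- A well-behaved hypergraph width measure. -/
structure WellBehaved (lam : Set (Set V) → Set V → ℚ) : Prop where
  one : ∀ (E : Set (Set V)) (x : V), 1 ≤ lam E {x}
  subadd : ∀ (E : Set (Set V)) (S T : Set V), lam E (S ∪ T) ≤ lam E S + lam E T
  add : ∀ (E : Set (Set V)) (S T : Set V), Disjoint S T →
    (∀ s ∈ S, ∀ t ∈ T, ¬ (gaif E).Adj s t) → lam E (S ∪ T) = lam E S + lam E T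
  mono : ∀ (E F : Set (Set V)) (S T : Set V), E ⊆ F → S ⊆ T → lam F S ≤ lam E T

/-- `(T, bag)` is a tree decomposition of `G`. -/
structure IsTreeDecomp {ι : Type} (G : SimpleGraph V) (T : SimpleGraph ι)
    (bag : ι → Set V) : Prop where
  conn : T.Connected
  acyclic : T.IsAcyclic
  edge_cover : ∀ ⦃u v : V⦄, G.Adj u v → ∃ t, u ∈ bag t ∧ v ∈ bag t
  vert_conn : ∀ v : V, (T.induce {t | v ∈ bag t}).Connected

/-- The `λ`-treewidth of `G` for a width measure `lam` on bags. -/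
noncomputable def lamTW (G : SimpleGraph V) (lam : Set V → ℕ) : ℕ :=
  sInf {k | ∃ (ι : Type) (T : SimpleGraph ι) (bag : ι → Set V),
    IsTreeDecomp G T bag ∧ ∀ t, lam (bag t) ≤ k}

/-- `M(G)`: attach a pendant vertex to every vertex of `G`. -/
def pend (G : SimpleGraph V) : SimpleGraph (V ⊕ V) :=
  SimpleGraph.fromRel (fun x y =>
    match x, y with
    | Sum.inl u, Sum.inl v => G.Adj u v
    | Sum.inl u, Sum.inr v => u = v
    | _, _ => False)

/-- `L²(G)`: vertices are the edges of `G`; two distinct edges are adjacent iff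
their union induces a connected subgraph. -/
def L2 (G : SimpleGraph V) : SimpleGraph G.edgeSet :=
  SimpleGraph.fromRel (fun e f =>
    ∃ x ∈ (e : Sym2 V), ∃ y ∈ (f : Sym2 V), x = y ∨ G.Adj x y)

/-- The Gaifman graph with a set `S` of vertices removed (vertices of `S` become isolated). -/
def gaifMinus (E : Set (Set V)) (S : Set V) : SimpleGraph V :=
  SimpleGraph.fromRel (fun u v => (gaif E).Adj u v ∧ u ∉ S ∧ v ∉ S)

/-- `S` is an `(A, B)`-separator: `A ∩ B ⊆ S` and every walk from `A` to `B` meets `S`. -/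
def IsSeparator (G : SimpleGraph V) (A B S : Set V) : Prop :=
  A ∩ B ⊆ S ∧ ∀ a ∈ A, ∀ b ∈ B, ∀ p : G.Walk a b, ∃ x ∈ p.support, x ∈ S

/-- Minors of clutters: obtained by repeated deletions and contractions. -/
inductive IsMinor : Set (Set V) → Set (Set V) → Prop
  | refl (E : Set (Set V)) : IsMinor E E
  | delStep {F E : Set (Set V)} (v : V) : IsMinor F E → IsMinor (del F v) E
  | contrStep {F E : Set (Set V)} (v : V) : IsMinor F E → IsMinor (contr F v) E


/-! ### Auxiliary infrastructure for `stmt_14` -/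

section TreeAux
variable {ι : Type*} {T : SimpleGraph ι}

/-- The inclusion homomorphism from an induced subgraph. -/
def inducedHom (T : SimpleGraph ι) (A : Set ι) : T.induce A →g T :=
  ⟨Subtype.val, fun h => h⟩

lemma reachable_induce_of_walk {A : Set ι} :
    ∀ {x y : ι} (w : T.Walk x y), (∀ z ∈ w.support, z ∈ A) →
      ∀ (hx : x ∈ A) (hy : y ∈ A), (T.induce A).Reachable ⟨x, hx⟩ ⟨y, hy⟩ := by
  intro x y w
  induction w with
  | nil => intro _ hx hy; exact SimpleGraph.Reachable.refl _
  | @cons a d b had w ih =>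
    intro hsup hx hy
    have hd : d ∈ A := hsup d (by simp [SimpleGraph.Walk.support_cons])
    have h1 : (T.induce A).Adj ⟨a, hx⟩ ⟨d, hd⟩ := had
    exact (h1.reachable).trans
      (ih (fun z hz => hsup z (by simp [SimpleGraph.Walk.support_cons, hz])) hd hy)

lemma exists_walk_of_induce_reachable {A : Set ι} {x y : ι} (hx : x ∈ A) (hy : y ∈ A)
    (h : (T.induce A).Reachable ⟨x, hx⟩ ⟨y, hy⟩) :
    ∃ w : T.Walk x y, ∀ z ∈ w.support, z ∈ A := by
  obtain ⟨w⟩ := h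
  refine ⟨w.map (inducedHom T A), ?_⟩
  intro z hz
  replace hz : z ∈ w.support.map (inducedHom T A) := by
    rw [← SimpleGraph.Walk.support_map]; exact hz
  rw [List.mem_map] at hz
  obtain ⟨⟨z', hz'⟩, _, rfl⟩ := hz
  exact hz'

lemma induce_connected_of_walks {A : Set ι} (hne : A.Nonempty)
    (h : ∀ x ∈ A, ∀ y ∈ A, ∃ w : T.Walk x y, ∀ z ∈ w.support, z ∈ A) :
    (T.induce A).Connected := by
  rw [SimpleGraph.connected_iff]
  constructor
  · rintro ⟨x, hx⟩ ⟨y, hy⟩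
    obtain ⟨w, hw⟩ := h x hx y hy
    exact reachable_induce_of_walk w hw hx hy
  · exact hne.to_subtype

/-- In a tree, any path between two vertices of a connected induced subgraph stays inside it. -/
lemma path_support_subset (hac : T.IsAcyclic) {A : Set ι}
    (hA : (T.induce A).Connected) {x y : ι} (hx : x ∈ A) (hy : y ∈ A)
    (q : T.Walk x y) (hq : q.IsPath) : ∀ z ∈ q.support, z ∈ A := by
  classical
  obtain ⟨w, hw⟩ := exists_walk_of_induce_reachable hx hy (hA.preconnected _ _)
  have := hac.path_unique ⟨q, hq⟩ ⟨w.bypass, w.bypass_isPath⟩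
  have hqq : q = w.bypass := congrArg Subtype.val this
  intro z hz
  exact hw z (w.support_bypass_subset (hqq ▸ hz))

/-- The median lemma: given paths `a–b` and `a–c` in an acyclic graph, there is a vertex on
both of them lying on every path from `b` to `c`. -/
lemma median (hac : T.IsAcyclic) {c : ι} :
    ∀ {a b : ι} (p : T.Walk a b), p.IsPath → ∀ (r : T.Walk a c), r.IsPath →
      ∃ m, m ∈ p.support ∧ m ∈ r.support ∧
        ∀ q : T.Walk b c, q.IsPath → m ∈ q.support := by
  classical
  intro a b p
  induction p with
  | nil =>
    intro _ r _
    exact ⟨_, by simp, r.start_mem_support, fun q _ => q.start_mem_support⟩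
  | @cons a d b had p' ih =>
    intro hp r hr
    rw [SimpleGraph.Walk.cons_isPath_iff] at hp
    by_cases hd : d ∈ r.support
    · obtain ⟨m, hm1, hm2, hm3⟩ := ih hp.1 (r.dropUntil d hd) (hr.dropUntil hd)
      exact ⟨m, by simp [SimpleGraph.Walk.support_cons, hm1],
        r.support_dropUntil_subset hd hm2, hm3⟩
    · have hr'' : (SimpleGraph.Walk.cons had.symm r).IsPath :=
        (SimpleGraph.Walk.cons_isPath_iff _ _).mpr ⟨hr, hd⟩
      obtain ⟨m, hm1, hm2, hm3⟩ := ih hp.1 (SimpleGraph.Walk.cons had.symm r) hr''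
      rw [SimpleGraph.Walk.support_cons, List.mem_cons] at hm2
      rcases hm2 with rfl | hm2
      · refine ⟨a, by simp, r.start_mem_support, ?_⟩
        intro q hq
        have hdq : m ∈ q.support := hm3 q hq
        have h2 : (q.dropUntil m hdq) = SimpleGraph.Walk.cons had.symm r := by
          have := hac.path_unique ⟨q.dropUntil m hdq, hq.dropUntil hdq⟩ ⟨_, hr''⟩
          exact congrArg Subtype.val this
        have : a ∈ (q.dropUntil m hdq).support := by
          rw [h2, SimpleGraph.Walk.support_cons]
          exact List.mem_cons_of_mem _ r.start_mem_support
        exact q.support_dropUntil_subset hdq this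
      · exact ⟨m, by simp [SimpleGraph.Walk.support_cons, hm1], hm2, hm3⟩

/-- A canonical path between two vertices in a connected graph. -/
noncomputable def treePath (hT : T.Connected) (x y : ι) : T.Walk x y := by
  classical exact (hT.preconnected x y).some.bypass

lemma treePath_isPath (hT : T.Connected) (x y : ι) : (treePath hT x y).IsPath := by
  classical exact SimpleGraph.Walk.bypass_isPath _

lemma helly3 (hT : T.Connected) (hac : T.IsAcyclic) {A B C : Set ι}
    (hA : (T.induce A).Connected) (hB : (T.induce B).Connected) (hC : (T.induce C).Connected)
    (hAB : (A ∩ B).Nonempty) (hBC : (B ∩ C).Nonempty) (hAC : (A ∩ C).Nonempty) :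
    (A ∩ B ∩ C).Nonempty := by
  obtain ⟨a, haA, haB⟩ := hAB
  obtain ⟨b, hbB, hbC⟩ := hBC
  obtain ⟨c, hcA, hcC⟩ := hAC
  obtain ⟨m, hmp, hmr, hmq⟩ := median hac (treePath hT a b) (treePath_isPath hT a b)
    (treePath hT a c) (treePath_isPath hT a c)
  refine ⟨m, ⟨?_, ?_⟩, ?_⟩
  · exact path_support_subset hac hA haA hcA _ (treePath_isPath hT a c) m hmr
  · exact path_support_subset hac hB haB hbB (treePath hT a b) (treePath_isPath hT a b) m hmp
  · exact path_support_subset hac hC hbC hcC (treePath hT b c) (treePath_isPath hT b c) m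
      (hmq _ (treePath_isPath hT b c))

/-- Intersection of two connected induced subgraphs of a tree is connected (when nonempty). -/
lemma inter_connected (hT : T.Connected) (hac : T.IsAcyclic) {A B : Set ι}
    (hA : (T.induce A).Connected) (hB : (T.induce B).Connected) (hne : (A ∩ B).Nonempty) :
    (T.induce (A ∩ B)).Connected := by
  refine induce_connected_of_walks hne ?_
  rintro x ⟨hxA, hxB⟩ y ⟨hyA, hyB⟩
  refine ⟨treePath hT x y, fun z hz => ⟨?_, ?_⟩⟩
  · exact path_support_subset hac hA hxA hyA _ (treePath_isPath hT x y) z hz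
  · exact path_support_subset hac hB hxB hyB _ (treePath_isPath hT x y) z hz

/-- Helly property for finitely many subtrees of a tree. -/
lemma helly (hT : T.Connected) (hac : T.IsAcyclic) :
    ∀ (n : ℕ) (s : Finset (Set ι)), s.card = n → s.Nonempty →
      (∀ A ∈ s, (T.induce A).Connected) →
      (∀ A ∈ s, ∀ B ∈ s, (A ∩ B).Nonempty) →
      ∃ m, ∀ A ∈ s, m ∈ A := by
  classical
  intro n
  induction n using Nat.strong_induction_on with
  | _ n IH =>
  intro s hcard hne hconn hpair
  by_cases h1 : s.card ≤ 1
  · obtain ⟨A, hA⟩ := hne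
    have hsA : s = {A} := Finset.eq_singleton_iff_unique_mem.mpr
      ⟨hA, fun B hB => Finset.card_le_one.mp h1 B hB A hA⟩
    obtain ⟨m, hm, _⟩ := hpair A hA A hA
    refine ⟨m, fun B hB => ?_⟩
    rw [hsA, Finset.mem_singleton] at hB
    exact hB ▸ hm
  · push_neg at h1
    obtain ⟨A, hA, B, hB, hne'⟩ := Finset.one_lt_card.mp h1
    set s' : Finset (Set ι) := insert (A ∩ B) ((s.erase A).erase B) with hs'
    have herase_sub : (s.erase A).erase B ⊆ s :=
      (Finset.erase_subset _ _).trans (Finset.erase_subset _ _)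
    have hcard' : s'.card < n := by
      have h2 : ((s.erase A).erase B).card = s.card - 2 := by
        rw [Finset.card_erase_of_mem (Finset.mem_erase.mpr ⟨Ne.symm hne', hB⟩),
          Finset.card_erase_of_mem hA]
        omega
      calc s'.card ≤ ((s.erase A).erase B).card + 1 := Finset.card_insert_le _ _
        _ = s.card - 2 + 1 := by rw [h2]
        _ < n := by omega
    have hmem' : ∀ C ∈ s', C = A ∩ B ∨ C ∈ s := by
      intro C hC
      rcases Finset.mem_insert.mp hC with h | h
      · exact Or.inl h
      · exact Or.inr (herase_sub h)
    have hconn' : ∀ C ∈ s', (T.induce C).Connected := by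
      intro C hC
      rcases hmem' C hC with rfl | h
      · exact inter_connected hT hac (hconn A hA) (hconn B hB) (hpair A hA B hB)
      · exact hconn C h
    have hpair' : ∀ C ∈ s', ∀ D ∈ s', (C ∩ D).Nonempty := by
      intro C hC D hD
      rcases hmem' C hC with rfl | hCs <;> rcases hmem' D hD with h | hDs
      · rw [h]; exact hpair A hA B hB |>.mono (by intro x hx; exact ⟨hx, hx⟩)
      · obtain ⟨m, hm⟩ := helly3 hT hac (hconn A hA) (hconn B hB) (hconn D hDs)
          (hpair A hA B hB) (hpair B hB D hDs) (hpair A hA D hDs)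
        exact ⟨m, ⟨hm.1.1, hm.1.2⟩, hm.2⟩
      · subst h
        obtain ⟨m, hm⟩ := helly3 hT hac (hconn A hA) (hconn B hB) (hconn C hCs)
          (hpair A hA B hB) (hpair B hB C hCs) (hpair A hA C hCs)
        exact ⟨m, hm.2, hm.1⟩
      · exact hpair C hCs D hDs
    obtain ⟨m, hm⟩ := IH s'.card hcard' s' rfl ⟨_, Finset.mem_insert_self _ _⟩ hconn' hpair'
    have hmAB : m ∈ A ∩ B := hm _ (Finset.mem_insert_self _ _)
    refine ⟨m, fun C hC => ?_⟩
    by_cases hCA : C = A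
    · exact hCA ▸ hmAB.1
    by_cases hCB : C = B
    · exact hCB ▸ hmAB.2
    · exact hm C (Finset.mem_insert_of_mem
        (Finset.mem_erase.mpr ⟨hCB, Finset.mem_erase.mpr ⟨hCA, hC⟩⟩))

/-- A (possibly empty-indexed) intersection of subtrees with a common point is connected. -/
lemma iInter_connected (hT : T.Connected) (hac : T.IsAcyclic) {κ : Sort*} {f : κ → Set ι}
    (hconn : ∀ k, (T.induce (f k)).Connected) (hne : (⋂ k, f k).Nonempty) :
    (T.induce (⋂ k, f k)).Connected := by
  refine induce_connected_of_walks hne ?_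
  intro x hx y hy
  refine ⟨treePath hT x y, fun z hz => mem_iInter.mpr fun k => ?_⟩
  exact path_support_subset hac (hconn k) (mem_iInter.mp hx k) (mem_iInter.mp hy k) _
    (treePath_isPath hT x y) z hz

lemma union_connected {A B : Set ι}
    (hA : (T.induce A).Connected) (hB : (T.induce B).Connected) (hne : (A ∩ B).Nonempty) :
    (T.induce (A ∪ B)).Connected := by
  classical
  obtain ⟨w, hwA, hwB⟩ := hne
  refine induce_connected_of_walks ⟨w, Or.inl hwA⟩ ?_
  have key : ∀ x ∈ A ∪ B, ∃ p : T.Walk x w, ∀ z ∈ p.support, z ∈ A ∪ B := by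
    rintro x (hx | hx)
    · obtain ⟨p, hp⟩ := exists_walk_of_induce_reachable hx hwA (hA.preconnected _ _)
      exact ⟨p, fun z hz => Or.inl (hp z hz)⟩
    · obtain ⟨p, hp⟩ := exists_walk_of_induce_reachable hx hwB (hB.preconnected _ _)
      exact ⟨p, fun z hz => Or.inr (hp z hz)⟩
  intro x hx y hy
  obtain ⟨p, hp⟩ := key x hx
  obtain ⟨q, hq⟩ := key y hy
  refine ⟨p.append q.reverse, fun z hz => ?_⟩
  rcases (SimpleGraph.Walk.mem_support_append_iff _ _).mp hz with h | h
  · exact hp z h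
  · rw [SimpleGraph.Walk.support_reverse, List.mem_reverse] at h
    exact hq z h

end TreeAux

section MuAlphaAux

lemma sym2_rep (e : Sym2 V) : ∃ u v, e = s(u, v) := by
  induction e using Sym2.ind with
  | _ u v => exact ⟨u, v, rfl⟩

lemma L2_adj (G : SimpleGraph V) (e f : G.edgeSet) : (L2 G).Adj e f ↔ e ≠ f ∧
    ((∃ x ∈ (e : Sym2 V), ∃ y ∈ (f : Sym2 V), x = y ∨ G.Adj x y) ∨
     (∃ x ∈ (f : Sym2 V), ∃ y ∈ (e : Sym2 V), x = y ∨ G.Adj x y)) :=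
  SimpleGraph.fromRel_adj _ e f

variable [Fintype V] (G : SimpleGraph V)

lemma bddAbove_muset (S : Set V) :
    BddAbove {k | ∃ a b : Fin k → V, IsInducedMatching G k a b ∧ ∀ i, a i ∈ S ∨ b i ∈ S} := by
  refine ⟨Fintype.card V, ?_⟩
  rintro k ⟨a, b, ⟨_, hsep⟩, _⟩
  have hinj : Function.Injective a := by
    intro i j hij
    by_contra hne
    exact (hsep i j hne (a i) (Or.inl rfl) (a j) (Or.inl rfl)).1 hij
  simpa using Fintype.card_le_of_injective a hinj

lemma zero_mem_muset (S : Set V) :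
    0 ∈ {k | ∃ a b : Fin k → V, IsInducedMatching G k a b ∧ ∀ i, a i ∈ S ∨ b i ∈ S} :=
  ⟨Fin.elim0, Fin.elim0, ⟨fun i => i.elim0, fun i => i.elim0⟩, fun i => i.elim0⟩

lemma bddAbove_alphaset {W : Type*} [Finite W] (H : SimpleGraph W) (S : Set W) :
    BddAbove {n | ∃ I : Set W, I ⊆ S ∧ IndepSet H I ∧ I.ncard = n} := by
  refine ⟨Nat.card W, ?_⟩
  rintro n ⟨I, _, _, rfl⟩
  calc I.ncard ≤ (univ : Set W).ncard := ncard_le_ncard (subset_univ I) finite_univ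
    _ = Nat.card W := ncard_univ W

lemma zero_mem_alphaset {W : Type*} (H : SimpleGraph W) (S : Set W) :
    0 ∈ {n | ∃ I : Set W, I ⊆ S ∧ IndepSet H I ∧ I.ncard = n} :=
  ⟨∅, empty_subset _, fun x hx => absurd hx (notMem_empty x), by simp⟩

/-- Per-bag inequality, direction A. -/
lemma alphaS_L2_le_muS (S : Set V) :
    alphaS (L2 G) {e : G.edgeSet | ∃ x ∈ (e : Sym2 V), x ∈ S} ≤ muS G S := by
  classical
  refine csSup_le ⟨0, zero_mem_alphaset _ _⟩ ?_
  rintro n ⟨I, hIsub, hIindep, hncard⟩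
  refine le_csSup (bddAbove_muset G S) ?_
  have hcard : Nat.card I = n := by rw [Nat.card_coe_set_eq]; exact hncard
  have g : I ≃ Fin n := Finite.equivFinOfCardEq hcard
  set f : Fin n → G.edgeSet := fun i => (g.symm i : G.edgeSet) with hf
  have hfI : ∀ i, f i ∈ I := fun i => (g.symm i).2
  have hfinj : Function.Injective f := fun i j hij => by
    have := Subtype.ext hij (p := (· ∈ I))
    simpa using congrArg g this
  have hrep : ∀ i : Fin n, ∃ p : V × V, (f i : Sym2 V) = s(p.1, p.2) := by
    intro i
    obtain ⟨u, v, huv⟩ := sym2_rep (f i : Sym2 V)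
    exact ⟨(u, v), huv⟩
  set a : Fin n → V := fun i => (hrep i).choose.1 with ha
  set b : Fin n → V := fun i => (hrep i).choose.2 with hb
  have hab : ∀ i, (f i : Sym2 V) = s(a i, b i) := fun i => (hrep i).choose_spec
  have hadj : ∀ i, G.Adj (a i) (b i) := by
    intro i
    have := (f i).2
    rwa [hab i, SimpleGraph.mem_edgeSet] at this
  have hmem : ∀ i x, x ∈ ({a i, b i} : Set V) ↔ x ∈ (f i : Sym2 V) := by
    intro i x
    rw [hab i, Sym2.mem_iff]
    simp
  have hnadj : ∀ i j, i ≠ j → ¬ (L2 G).Adj (f i) (f j) := by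
    intro i j hij
    exact hIindep (hfI i) (hfI j) (fun h => hij (hfinj h))
  refine ⟨a, b, ⟨hadj, ?_⟩, ?_⟩
  · intro i j hij x hx y hy
    have hne : f i ≠ f j := fun h => hij (hfinj h)
    have := hnadj i j hij
    rw [L2_adj] at this
    have hnorel : ¬ (∃ x ∈ (f i : Sym2 V), ∃ y ∈ (f j : Sym2 V), x = y ∨ G.Adj x y) :=
      fun h => this ⟨hne, Or.inl h⟩
    constructor
    · rintro rfl
      exact absurd ⟨x, (hmem i x).mp hx, x, (hmem j x).mp hy, Or.inl rfl⟩ hnorel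
    · intro hadjxy
      exact absurd ⟨x, (hmem i x).mp hx, y, (hmem j y).mp hy, Or.inr hadjxy⟩ hnorel
  · intro i
    obtain ⟨x, hxe, hxS⟩ := hIsub (hfI i)
    rcases (hmem i x).mpr hxe with h | h
    · exact Or.inl (h ▸ hxS)
    · exact Or.inr (h ▸ hxS)

/-- Per-bag inequality, direction B. -/
lemma muS_le_alphaS_L2 (F : Set G.edgeSet) :
    muS G {v | ∀ e : G.edgeSet, v ∈ (e : Sym2 V) → e ∈ F} ≤ alphaS (L2 G) F := by
  classical
  refine csSup_le ⟨0, zero_mem_muset G _⟩ ?_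
  rintro k ⟨a, b, ⟨hadj, hsep⟩, hmeet⟩
  refine le_csSup (bddAbove_alphaset _ _) ?_
  set ei : Fin k → G.edgeSet := fun i => ⟨s(a i, b i), (G.mem_edgeSet).mpr (hadj i)⟩ with hei
  have heinj : Function.Injective ei := by
    intro i j hij
    by_contra hne
    have hmem : a i ∈ (ei j : Sym2 V) := by rw [← hij]; exact Sym2.mem_iff.mpr (Or.inl rfl)
    rw [Sym2.mem_iff (b := a j) (c := b j)] at hmem
    rcases hmem with h | h
    · exact (hsep i j hne (a i) (Or.inl rfl) (a j) (Or.inl rfl)).1 h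
    · exact (hsep i j hne (a i) (Or.inl rfl) (b j) (Or.inr rfl)).1 h
  refine ⟨range ei, ?_, ?_, ?_⟩
  · rintro e ⟨i, rfl⟩
    rcases hmeet i with h | h
    · exact h (ei i) (Sym2.mem_iff.mpr (Or.inl rfl))
    · exact h (ei i) (Sym2.mem_iff.mpr (Or.inr rfl))
  · rintro e ⟨i, rfl⟩ f ⟨j, rfl⟩ hne hadj'
    have hij : i ≠ j := fun h => hne (h ▸ rfl)
    rw [L2_adj] at hadj'
    rcases hadj'.2 with ⟨x, hx, y, hy, hxy⟩ | ⟨x, hx, y, hy, hxy⟩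
    · rw [Sym2.mem_iff] at hx hy
      have := hsep i j hij x (by simpa using hx) y (by simpa using hy)
      rcases hxy with rfl | h
      · exact this.1 rfl
      · exact this.2 h
    · rw [Sym2.mem_iff] at hx hy
      have := hsep j i hij.symm x (by simpa using hx) y (by simpa using hy)
      rcases hxy with rfl | h
      · exact this.1 rfl
      · exact this.2 h
  · rw [← image_univ, ncard_image_of_injective _ heinj, ncard_univ]
    simp

end MuAlphaAux

section Directions

/-- Direction A: a tree decomposition of `G` yields one of `L²(G)` of no larger width. -/
lemma dirA {V : Type} [Fintype V] (G : SimpleGraph V) {k : ℕ}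
    (h : ∃ (ι : Type) (T : SimpleGraph ι) (bag : ι → Set V),
      IsTreeDecomp G T bag ∧ ∀ t, muS G (bag t) ≤ k) :
    ∃ (ι : Type) (T : SimpleGraph ι) (F : ι → Set G.edgeSet),
      IsTreeDecomp (L2 G) T F ∧ ∀ t, alphaS (L2 G) (F t) ≤ k := by
  obtain ⟨ι, T, bag, hdec, hwid⟩ := h
  refine ⟨ι, T, fun t => {e : G.edgeSet | ∃ x ∈ (e : Sym2 V), x ∈ bag t},
    ⟨hdec.conn, hdec.acyclic, ?_, ?_⟩, ?_⟩
  · -- edge cover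
    intro e f hadj
    rw [L2_adj] at hadj
    rcases hadj.2 with ⟨x, hx, y, hy, hxy⟩ | ⟨x, hx, y, hy, hxy⟩
    · rcases hxy with rfl | hxy
      · obtain ⟨⟨t, ht⟩⟩ := (hdec.vert_conn x).nonempty
        exact ⟨t, ⟨x, hx, ht⟩, ⟨x, hy, ht⟩⟩
      · obtain ⟨t, ht1, ht2⟩ := hdec.edge_cover hxy
        exact ⟨t, ⟨x, hx, ht1⟩, ⟨y, hy, ht2⟩⟩
    · rcases hxy with rfl | hxy
      · obtain ⟨⟨t, ht⟩⟩ := (hdec.vert_conn x).nonempty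
        exact ⟨t, ⟨x, hy, ht⟩, ⟨x, hx, ht⟩⟩
      · obtain ⟨t, ht1, ht2⟩ := hdec.edge_cover hxy
        exact ⟨t, ⟨y, hy, ht2⟩, ⟨x, hx, ht1⟩⟩
  · -- vertex connectivity
    intro e
    obtain ⟨u, v, huv⟩ := sym2_rep (e : Sym2 V)
    have hGuv : G.Adj u v := by
      have := e.2
      rwa [huv, SimpleGraph.mem_edgeSet] at this
    have hset : {t | e ∈ {e : G.edgeSet | ∃ x ∈ (e : Sym2 V), x ∈ bag t}} =
        {t | u ∈ bag t} ∪ {t | v ∈ bag t} := by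
      ext t
      simp only [mem_setOf_eq, mem_union, huv, Sym2.mem_iff]
      constructor
      · rintro ⟨x, (rfl | rfl), hx⟩
        · exact Or.inl hx
        · exact Or.inr hx
      · rintro (h | h)
        · exact ⟨u, Or.inl rfl, h⟩
        · exact ⟨v, Or.inr rfl, h⟩
    rw [hset]
    obtain ⟨t, ht1, ht2⟩ := hdec.edge_cover hGuv
    exact union_connected (hdec.vert_conn u) (hdec.vert_conn v) ⟨t, ht1, ht2⟩
  · exact fun t => (alphaS_L2_le_muS G (bag t)).trans (hwid t)

/-- Direction B: a tree decomposition of `L²(G)` yields one of `G` of no larger width. -/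
lemma dirB {V : Type} [Fintype V] (G : SimpleGraph V) {k : ℕ}
    (h : ∃ (ι : Type) (T : SimpleGraph ι) (F : ι → Set G.edgeSet),
      IsTreeDecomp (L2 G) T F ∧ ∀ t, alphaS (L2 G) (F t) ≤ k) :
    ∃ (ι : Type) (T : SimpleGraph ι) (bag : ι → Set V),
      IsTreeDecomp G T bag ∧ ∀ t, muS G (bag t) ≤ k := by
  classical
  obtain ⟨ι, T, F, hdec, hwid⟩ := h
  set Te : G.edgeSet → Set ι := fun e => {t | e ∈ F t} with hTe
  have hTconn := hdec.conn
  have hTac := hdec.acyclic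
  have hTe_conn : ∀ e, (T.induce (Te e)).Connected := hdec.vert_conn
  have hcommon : ∀ e f : G.edgeSet,
      (∃ x ∈ (e : Sym2 V), ∃ y ∈ (f : Sym2 V), x = y ∨ G.Adj x y) →
      (Te e ∩ Te f).Nonempty := by
    intro e f hrel
    by_cases hef : e = f
    · obtain ⟨⟨t, ht⟩⟩ := (hTe_conn e).nonempty
      exact ⟨t, ht, hef ▸ ht⟩
    · obtain ⟨t, h1, h2⟩ := hdec.edge_cover ((L2_adj G e f).mpr ⟨hef, Or.inl hrel⟩)
      exact ⟨t, h1, h2⟩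
  have hhelly : ∀ (Es : Set G.edgeSet), Es.Nonempty →
      (∀ e ∈ Es, ∀ f ∈ Es, ∃ x ∈ (e : Sym2 V), ∃ y ∈ (f : Sym2 V), x = y ∨ G.Adj x y) →
      ∃ t, ∀ e ∈ Es, e ∈ F t := by
    intro Es hne hrel
    have hfin : (Te '' Es).Finite := Es.toFinite.image Te
    obtain ⟨e0, he0⟩ := hne
    obtain ⟨m, hm⟩ := helly hTconn hTac hfin.toFinset.card hfin.toFinset rfl
      ⟨Te e0, hfin.mem_toFinset.mpr ⟨e0, he0, rfl⟩⟩
      (by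
        intro A hA
        rw [Set.Finite.mem_toFinset] at hA
        obtain ⟨e, _, rfl⟩ := hA
        exact hTe_conn e)
      (by
        intro A hA B hB
        rw [Set.Finite.mem_toFinset] at hA hB
        obtain ⟨e, he, rfl⟩ := hA
        obtain ⟨f, hf, rfl⟩ := hB
        exact hcommon e f (hrel e he f hf))
    exact ⟨m, fun e he => hm (Te e) (hfin.mem_toFinset.mpr ⟨e, he, rfl⟩)⟩
  refine ⟨ι, T, fun t => {v | ∀ e : G.edgeSet, v ∈ (e : Sym2 V) → e ∈ F t},
    ⟨hTconn, hTac, ?_, ?_⟩, ?_⟩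
  · -- edge cover
    intro u v huv
    have hpairrel : ∀ e ∈ {e : G.edgeSet | u ∈ (e : Sym2 V) ∨ v ∈ (e : Sym2 V)},
        ∀ f ∈ {e : G.edgeSet | u ∈ (e : Sym2 V) ∨ v ∈ (e : Sym2 V)},
        ∃ x ∈ (e : Sym2 V), ∃ y ∈ (f : Sym2 V), x = y ∨ G.Adj x y := by
      rintro e (he | he) f (hf | hf)
      · exact ⟨u, he, u, hf, Or.inl rfl⟩
      · exact ⟨u, he, v, hf, Or.inr huv⟩
      · exact ⟨v, he, u, hf, Or.inr huv.symm⟩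
      · exact ⟨v, he, v, hf, Or.inl rfl⟩
    obtain ⟨t, ht⟩ := hhelly {e : G.edgeSet | u ∈ (e : Sym2 V) ∨ v ∈ (e : Sym2 V)}
      ⟨⟨s(u, v), (G.mem_edgeSet).mpr huv⟩, Or.inl (Sym2.mem_iff.mpr (Or.inl rfl))⟩ hpairrel
    exact ⟨t, fun e he => ht e (Or.inl he), fun e he => ht e (Or.inr he)⟩
  · -- vertex connectivity
    intro v
    have hset : {t | v ∈ {v | ∀ e : G.edgeSet, v ∈ (e : Sym2 V) → e ∈ F t}} =
        ⋂ (w : {e : G.edgeSet // v ∈ (e : Sym2 V)}), Te w.1 := by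
      ext t
      simp only [mem_setOf_eq, mem_iInter]
      exact ⟨fun h w => h w.1 w.2, fun h e he => h ⟨e, he⟩⟩
    rw [hset]
    refine iInter_connected hTconn hTac (fun w => hTe_conn w.1) ?_
    by_cases hv : ∃ e : G.edgeSet, v ∈ (e : Sym2 V)
    · obtain ⟨t, ht⟩ := hhelly {e : G.edgeSet | v ∈ (e : Sym2 V)} hv
        (fun e he f hf => ⟨v, he, v, hf, Or.inl rfl⟩)
      exact ⟨t, mem_iInter.mpr fun w => ht w.1 w.2⟩
    · obtain ⟨t⟩ := hTconn.nonempty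
      exact ⟨t, mem_iInter.mpr fun w => absurd ⟨w.1, w.2⟩ hv⟩
  · exact fun t => (muS_le_alphaS_L2 G (F t)).trans (hwid t)

end Directions


/-- `μ-tw(G) = α-tw(L²(G))`. -/
theorem stmt_14 {V : Type} [Fintype V] (G : SimpleGraph V) :
    lamTW G (muS G) = lamTW (L2 G) (alphaS (L2 G)) := by
  unfold lamTW
  congr 1
  ext k
  simp only [mem_setOf_eq]
  exact ⟨fun h => dirA G h, fun h => dirB G h⟩
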